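/- Let f : ℝ^m → ℝ^m be differentiable, x̄ ∈ ℝ^m, A ∈ ℝ^{m×m}, and r* > 0. Suppose there exist Y, Z > 0 with ‖A f(x̄)‖ ≤ Y, sup_{x ∈ closedBall(x̄, r*)} ‖I − A·Df(x)‖ ≤ Z < 1, and 0 < Y/(1−Z) < r*. Then for every r ∈ [Y/(1−Z), r*] there exists a unique zero of f in the closed ball of radius r around x̄. -/

import Mathlib

/-- **Validated zero theorem.** If `‖A f(xbar)‖ ≤ Y`, `‖I − A·Df(x)‖ ≤ Z < 1` on the
closed ball of radius `r*`, and `0 < Y/(1−Z) < r*`, then for every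
`r ∈ [Y/(1−Z), r*]` there is a unique zero of `f` in the closed ball of radius `r`. -/
theorem validated_zero {m : ℕ}
    (f : EuclideanSpace ℝ (Fin m) → EuclideanSpace ℝ (Fin m))
    (f' : EuclideanSpace ℝ (Fin m) → (EuclideanSpace ℝ (Fin m) →L[ℝ] EuclideanSpace ℝ (Fin m)))
    (hdiff : ∀ x, HasFDerivAt f (f' x) x)
    (xbar : EuclideanSpace ℝ (Fin m))
    (A : EuclideanSpace ℝ (Fin m) →L[ℝ] EuclideanSpace ℝ (Fin m))
    (rstar Y Z : ℝ) (hrstar : 0 < rstar) (hY : 0 < Y) (hZ : 0 < Z)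
    (hYbound : ‖A (f xbar)‖ ≤ Y)
    (hZbound : ∀ x ∈ Metric.closedBall xbar rstar,
      ‖(ContinuousLinearMap.id ℝ (EuclideanSpace ℝ (Fin m))) - A.comp (f' x)‖ ≤ Z)
    (hZlt : Z < 1)
    (hmin_pos : 0 < Y / (1 - Z)) (hmin_lt : Y / (1 - Z) < rstar) :
    ∀ r ∈ Set.Icc (Y / (1 - Z)) rstar,
      ∃! x, x ∈ Metric.closedBall xbar r ∧ f x = 0 := by
  intro r hr
  obtain ⟨hr1, hr2⟩ := hr
  have hrpos : 0 < r := lt_of_lt_of_le hmin_pos hr1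
  set g : EuclideanSpace ℝ (Fin m) → EuclideanSpace ℝ (Fin m) :=
    fun x => x - A (f x) with hg
  -- derivative of g
  have hgd : ∀ x, HasFDerivAt g
      ((ContinuousLinearMap.id ℝ (EuclideanSpace ℝ (Fin m))) - A.comp (f' x)) x := by
    intro x
    exact (hasFDerivAt_id x).sub ((A.hasFDerivAt).comp x (hdiff x))
  set B := Metric.closedBall xbar r with hB
  have hBsub : B ⊆ Metric.closedBall xbar rstar :=
    Metric.closedBall_subset_closedBall hr2
  have hconv : Convex ℝ B := convex_closedBall _ _
  -- Lipschitz estimate on B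
  have hlip : ∀ x ∈ B, ∀ y ∈ B, ‖g y - g x‖ ≤ Z * ‖y - x‖ := by
    intro x hx y hy
    exact hconv.norm_image_sub_le_of_norm_hasFDerivWithin_le
      (fun z hz => (hgd z).hasFDerivWithinAt)
      (fun z hz => hZbound z (hBsub hz)) hx hy
  -- g maps B into itself
  have hmaps : Set.MapsTo g B B := by
    intro x hx
    have h1 : ‖g x - g xbar‖ ≤ Z * ‖x - xbar‖ :=
      hlip xbar (Metric.mem_closedBall_self hrpos.le) x hx
    have h2 : ‖g xbar - xbar‖ ≤ Y := by
      simpa [hg, sub_sub_cancel_left, norm_neg] using hYbound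
    have hxd : ‖x - xbar‖ ≤ r := by
      rwa [Metric.mem_closedBall, dist_eq_norm] at hx
    have hYr : Y ≤ (1 - Z) * r := by
      rw [div_le_iff₀ (by linarith)] at hr1
      linarith [hr1]
    have : ‖g x - xbar‖ ≤ r := by
      calc ‖g x - xbar‖ ≤ ‖g x - g xbar‖ + ‖g xbar - xbar‖ := by
              have := norm_add_le (g x - g xbar) (g xbar - xbar)
              simpa [sub_add_sub_cancel] using this
        _ ≤ Z * ‖x - xbar‖ + Y := add_le_add h1 h2
        _ ≤ Z * r + (1 - Z) * r := add_le_add (by nlinarith) hYr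
        _ = r := by ring
    rwa [Metric.mem_closedBall, dist_eq_norm]
  -- A is injective
  have hAinj : Function.Injective A := by
    have hxbar : xbar ∈ Metric.closedBall xbar rstar := Metric.mem_closedBall_self hrstar.le
    have hnorm : ‖(1 : EuclideanSpace ℝ (Fin m) →L[ℝ] EuclideanSpace ℝ (Fin m))
        - A.comp (f' xbar)‖ < 1 :=
      lt_of_le_of_lt (hZbound xbar hxbar) hZlt
    have hu : IsUnit (A.comp (f' xbar)) := by
      have := (Units.oneSub _ hnorm).isUnit
      simpa using this
    have hsurj : Function.Surjective (A.comp (f' xbar)) := by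
      obtain ⟨u, hu⟩ := hu
      intro y
      refine ⟨(↑u⁻¹ : EuclideanSpace ℝ (Fin m) →L[ℝ] EuclideanSpace ℝ (Fin m)) y, ?_⟩
      have h1 : (A.comp (f' xbar)) * (↑u⁻¹ : EuclideanSpace ℝ (Fin m) →L[ℝ] EuclideanSpace ℝ (Fin m)) = 1 := by
        rw [← hu]; exact u.mul_inv
      have := congrFun (congrArg DFunLike.coe h1) y
      simpa using this
    have hAsurj : Function.Surjective A := by
      intro y
      obtain ⟨x, hx⟩ := hsurj y
      exact ⟨f' xbar x, hx⟩
    have : Function.Injective (A : EuclideanSpace ℝ (Fin m) →ₗ[ℝ] EuclideanSpace ℝ (Fin m)) :=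
      (LinearMap.injective_iff_surjective
        (f := (A : EuclideanSpace ℝ (Fin m) →ₗ[ℝ] EuclideanSpace ℝ (Fin m)))).mpr hAsurj
    exact this
  -- fixed point ↔ zero
  have hfix : ∀ x, g x = x ↔ f x = 0 := by
    intro x
    constructor
    · intro h
      have : A (f x) = 0 := by
        have := h
        simp only [hg] at this
        have h0 : x - A (f x) = x := this
        have := sub_eq_self.mp h0
        exact this
      have : A (f x) = A 0 := by simpa using this
      exact hAinj this
    · intro h; simp [hg, h]
  -- existence via contracting map on the complete set B
  have hBc : IsComplete B := (Metric.isClosed_closedBall).isComplete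
  have hK : (⟨Z, hZ.le⟩ : NNReal) < 1 := by
    exact (NNReal.coe_lt_coe (r₁ := ⟨Z, hZ.le⟩) (r₂ := 1)).mp hZlt
  have hlipw : LipschitzOnWith ⟨Z, hZ.le⟩ g B := by
    apply LipschitzOnWith.of_dist_le_mul
    intro x hx y hy
    rw [dist_eq_norm, dist_eq_norm]
    exact hlip y hy x hx
  have hcontr : ContractingWith ⟨Z, hZ.le⟩ (hmaps.restrict g B B) := by
    refine ⟨hK, ?_⟩
    intro x y
    have := hlipw x.2 y.2
    simpa [Subtype.edist_eq] using this
  have hxbarB : xbar ∈ B := Metric.mem_closedBall_self hrpos.le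
  have hed : edist xbar (g xbar) ≠ ⊤ := edist_ne_top _ _
  obtain ⟨x0, hx0B, hx0fix, -⟩ :=
    hcontr.exists_fixedPoint' hBc hmaps hxbarB hed
  refine ⟨x0, ⟨hx0B, (hfix x0).mp hx0fix⟩, ?_⟩
  rintro y ⟨hyB, hyf⟩
  have hyfix : g y = y := (hfix y).mpr hyf
  -- uniqueness from the contraction estimate
  have h := hlip x0 hx0B y hyB
  rw [hyfix, hx0fix] at h
  have : (1 - Z) * ‖y - x0‖ ≤ 0 := by nlinarith
  have hz : ‖y - x0‖ ≤ 0 := by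
    have h1Z : 0 < 1 - Z := by linarith
    nlinarith [norm_nonneg (y - x0)]
  have : y - x0 = 0 := by
    have := le_antisymm hz (norm_nonneg _)
    exact norm_eq_zero.mp this
  exact sub_eq_zero.mp this
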